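/- arXiv:1910.11522 — 6 statements merged into one kernel-verified Lean document; each statement's English description precedes it below -/
import Mathlib

section
/- Let (S_1,...,S_ℓ) be an ordered set partition of {1,...,n} and let x ∈ R^n satisfy Σ x_i = 0. If for two indices i < j the linear forms L_i(x) and L_j(x) are equal, where L_p(x) = x_{S_{p+1}} + 2x_{S_{p+2}} + ⋯ + (ℓ-1)x_{S_{p-1}} (cyclic block indices), then x_{S_i ∪ S_{i+1} ∪ ⋯ ∪ S_{j-1}} = 0. -/
open Fin.NatCast

theorem stmt3 (n ℓ : ℕ) [NeZero ℓ]
    (S : Fin ℓ → Finset (Fin n))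
    (hdisj : ∀ p q : Fin ℓ, p ≠ q → Disjoint (S p) (S q))
    (hcover : ∀ m : Fin n, ∃ p : Fin ℓ, m ∈ S p)
    (x : Fin n → ℝ) (hx : ∑ i, x i = 0)
    (L : Fin ℓ → ℝ)
    (hL : ∀ p : Fin ℓ,
      L p = ∑ q ∈ Finset.Icc 1 (ℓ - 1), (q : ℝ) * ∑ t ∈ S (p + (q : Fin ℓ)), x t)
    (i j : Fin ℓ) (hij : i < j) (heq : L i = L j) :
    ∑ p ∈ Finset.Ico i j, ∑ t ∈ S p, x t = 0 := by
  have hℓ : 0 < ℓ := Nat.pos_of_ne_zero (NeZero.ne ℓ)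
  set y : Fin ℓ → ℝ := fun p => ∑ t ∈ S p, x t with hy
  have htot : ∑ p, y p = 0 := by
    rw [← hx]
    have hcup : (Finset.univ : Finset (Fin n)) = Finset.univ.biUnion S := by
      ext m
      simp only [Finset.mem_univ, Finset.mem_biUnion, true_iff, true_and]
      exact hcover m
    rw [hcup, Finset.sum_biUnion]
    intro p _ q _ hpq
    exact hdisj p q hpq
  have hsub : ∀ a b : Fin ℓ, (a - b).val =
      if b.val ≤ a.val then a.val - b.val else a.val + ℓ - b.val := by
    intro a b
    have ha := a.is_lt; have hb := b.is_lt
    have h : (a - b).val = (ℓ - b.val + a.val) % ℓ := by rw [Fin.sub_def]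
    by_cases hba : b.val ≤ a.val
    · rw [if_pos hba, h, Nat.mod_eq_sub_mod (by omega),
        show ℓ - b.val + a.val - ℓ = a.val - b.val by omega,
        Nat.mod_eq_of_lt (by omega)]
    · rw [if_neg hba, h, Nat.mod_eq_of_lt (by omega)]
      omega
  have hA : ∀ p : Fin ℓ, L p = ∑ r : Fin ℓ, ((r - p).val : ℝ) * y r := by
    intro p
    have e1 : ∑ r : Fin ℓ, ((r - p).val : ℝ) * y r
        = ∑ q : Fin ℓ, ((q.val : ℕ) : ℝ) * y (p + q) := by
      rw [← Equiv.sum_comp (Equiv.addLeft p) (fun r => ((r - p).val : ℝ) * y r)]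
      simp [add_sub_cancel_left]
    have e2 : ∑ q : Fin ℓ, ((q.val : ℕ) : ℝ) * y (p + q)
        = ∑ m ∈ Finset.range ℓ, (m : ℝ) * y (p + (m : Fin ℓ)) := by
      rw [← Fin.sum_univ_eq_sum_range (fun m => (m : ℝ) * y (p + (m : Fin ℓ))) ℓ]
      apply Finset.sum_congr rfl
      intro q _
      rw [Fin.cast_val_eq_self]
    have e3 : Finset.Ico 1 ℓ = Finset.Icc 1 (ℓ - 1) := by
      rw [← Finset.Ico_add_one_right_eq_Icc]
      congr 1
      omega
    rw [hL p, e1, e2, Finset.range_eq_Ico,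
      Finset.sum_eq_sum_Ico_succ_bot hℓ (fun m => (m : ℝ) * y (p + (m : Fin ℓ))), e3]
    simp
    rfl
  have hkey : ∑ r : Fin ℓ, (((r - i).val : ℝ) - ((r - j).val : ℝ)) * y r = 0 := by
    simp only [sub_mul, Finset.sum_sub_distrib]
    rw [← hA i, ← hA j, heq, sub_self]
  have hij' : i.val < j.val := hij
  have hcoef : ∀ r : Fin ℓ, ((r - i).val : ℝ) - ((r - j).val : ℝ)
      = ((j.val - i.val : ℕ) : ℝ) - (if r ∈ Finset.Ico i j then (ℓ : ℝ) else 0) := by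
    intro r
    have hr := r.is_lt
    by_cases hm : r ∈ Finset.Ico i j
    · rw [if_pos hm]
      rw [Finset.mem_Ico, Fin.le_def, Fin.lt_def] at hm
      rw [hsub r i, hsub r j, if_pos hm.1, if_neg (by omega),
        Nat.cast_sub hm.1, Nat.cast_sub (by omega), Nat.cast_sub (le_of_lt hij')]
      push_cast
      ring
    · rw [if_neg hm]
      rw [Finset.mem_Ico, Fin.le_def, Fin.lt_def] at hm
      push_neg at hm
      by_cases h3 : i.val ≤ r.val
      · have h4 : j.val ≤ r.val := by have := hm h3; omega
        rw [hsub r i, hsub r j, if_pos h3, if_pos h4,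
          Nat.cast_sub h3, Nat.cast_sub h4, Nat.cast_sub (le_of_lt hij')]
        ring
      · have h4 : ¬ j.val ≤ r.val := by omega
        rw [hsub r i, hsub r j, if_neg h3, if_neg h4,
          Nat.cast_sub (show i.val ≤ r.val + ℓ by omega),
          Nat.cast_sub (show j.val ≤ r.val + ℓ by omega),
          Nat.cast_sub (le_of_lt hij')]
        push_cast
        ring
  simp only [hcoef] at hkey
  simp only [sub_mul, Finset.sum_sub_distrib, ← Finset.mul_sum, htot, mul_zero,
    ite_mul, zero_mul, Finset.sum_ite_mem, Finset.univ_inter, zero_sub,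
    neg_eq_zero] at hkey
  have hℓR : (ℓ : ℝ) ≠ 0 := Nat.cast_ne_zero.mpr (NeZero.ne ℓ)
  rcases mul_eq_zero.mp hkey with h | h
  · exact absurd h hℓR
  · exact h
end

section
/- Let (S_1,...,S_ℓ) be an ordered set partition of {1,...,n}, x ∈ R^n with Σ x_i = 0, and suppose the minimum of L_1(x),...,L_ℓ(x) is attained at both indices i and j with i < j. Then for every p with i ≤ p ≤ j-1, one has x_{S_i ∪ S_{i+1} ∪ ⋯ ∪ S_{p-1}} ≥ 0 (with the convention that the empty union gives 0). -/
theorem stmt4 (n ℓ : ℕ) [NeZero ℓ]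
    (S : Fin ℓ → Finset (Fin n))
    (hdisj : ∀ p q : Fin ℓ, p ≠ q → Disjoint (S p) (S q))
    (hcover : ∀ m : Fin n, ∃ p : Fin ℓ, m ∈ S p)
    (x : Fin n → ℝ) (hx : ∑ i, x i = 0)
    (L : Fin ℓ → ℝ)
    (hL : ∀ p : Fin ℓ,
      L p = ∑ q ∈ Finset.Icc 1 (ℓ - 1), (q : ℝ) * ∑ t ∈ S (p + (Fin.ofNat ℓ q : Fin ℓ)), x t)
    (i j : Fin ℓ) (hij : i < j) (heq : L i = L j)
    (hmin : ∀ p : Fin ℓ, L i ≤ L p) :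
    ∀ p : Fin ℓ, i ≤ p → p < j → 0 ≤ ∑ q ∈ Finset.Ico i p, ∑ t ∈ S q, x t := by
  intro p hip hpj
  set y : Fin ℓ → ℝ := fun q => ∑ t ∈ S q, x t with hy
  have hℓ : 0 < ℓ := Nat.pos_of_ne_zero (NeZero.ne ℓ)
  have hunion : Finset.univ.biUnion S = (Finset.univ : Finset (Fin n)) := by
    apply Finset.eq_univ_iff_forall.mpr
    intro m
    obtain ⟨q, hq⟩ := hcover m
    exact Finset.mem_biUnion.mpr ⟨q, Finset.mem_univ _, hq⟩
  have htot : ∑ s : Fin ℓ, y s = 0 := by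
    calc ∑ s : Fin ℓ, y s = ∑ t ∈ Finset.univ.biUnion S, x t :=
          (Finset.sum_biUnion (fun a _ b _ hab => hdisj a b hab)).symm
      _ = 0 := by rw [hunion]; exact hx
  have hform : ∀ r : Fin ℓ, L r = ∑ s : Fin ℓ, ((s - r).val : ℝ) * y s := by
    intro r
    rw [hL r]
    have h1 : Finset.range ℓ = insert 0 (Finset.Icc 1 (ℓ - 1)) := by
      ext q; simp [Finset.mem_range, Finset.mem_Icc]; omega
    have h2 : ∑ q ∈ Finset.Icc 1 (ℓ - 1), (q : ℝ) * y (r + (Fin.ofNat ℓ q : Fin ℓ))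
        = ∑ q ∈ Finset.range ℓ, (q : ℝ) * y (r + (Fin.ofNat ℓ q : Fin ℓ)) := by
      rw [h1, Finset.sum_insert (by simp)]; simp
    rw [h2, ← Fin.sum_univ_eq_sum_range (fun q => (q : ℝ) * y (r + (Fin.ofNat ℓ q : Fin ℓ))) ℓ]
    have h3 : ∀ u : Fin ℓ, ((u.val : ℕ) : ℝ) * y (r + (Fin.ofNat ℓ (u.val : ℕ) : Fin ℓ))
        = ((r + u - r).val : ℝ) * y (r + u) := by
      intro u
      rw [Fin.ofNat_val_eq_self, add_sub_cancel_left]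
    rw [Finset.sum_congr rfl (fun u _ => h3 u)]
    exact Equiv.sum_comp (Equiv.addLeft r) (fun s => ((s - r).val : ℝ) * y s)
  have hsubval : ∀ (a b : Fin ℓ), ((a - b).val : ℝ)
      = (a.val : ℝ) - b.val + if b ≤ a then 0 else (ℓ : ℝ) := by
    intro a b
    have h1 := Fin.intCast_val_sub_eq_sub_add_ite a b
    have h2 := congrArg (fun z : ℤ => (z : ℝ)) h1
    push_cast at h2
    rw [h2]
  have key : L p - L i = (ℓ : ℝ) * ∑ s ∈ Finset.Ico i p, y s := by
    rw [hform p, hform i, ← Finset.sum_sub_distrib]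
    have hterm : ∀ s : Fin ℓ, ((s - p).val : ℝ) * y s - ((s - i).val : ℝ) * y s
        = ((i.val : ℝ) - p.val) * y s
          + (if s ∈ Finset.Ico i p then (ℓ : ℝ) * y s else 0) := by
      intro s
      rw [hsubval s p, hsubval s i]
      by_cases hm : s ∈ Finset.Ico i p
      · rw [if_pos hm]
        rw [Finset.mem_Ico] at hm
        obtain ⟨h2, h1⟩ := hm
        rw [if_neg (not_le.mpr h1), if_pos h2]
        ring
      · rw [if_neg hm]
        rw [Finset.mem_Ico, not_and_or, not_le, not_lt] at hm
        rcases hm with h2 | h1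
        · rw [if_neg (fun h => (not_le.mpr h2) (le_trans hip h)), if_neg (not_le.mpr h2)]
          ring
        · rw [if_pos h1, if_pos (le_trans hip h1)]
          ring
    rw [Finset.sum_congr rfl (fun s _ => hterm s), Finset.sum_add_distrib,
      ← Finset.mul_sum, htot, mul_zero, zero_add, Finset.sum_ite_mem,
      Finset.univ_inter, Finset.mul_sum]
  have hge := hmin p
  have hl : (0 : ℝ) < ℓ := by exact_mod_cast hℓ
  have hsum : 0 ≤ (ℓ : ℝ) * ∑ s ∈ Finset.Ico i p, y s := by rw [← key]; linarith
  nlinarith [hsum, hl]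
end

section
/- Let ((S_1)_{s_1},...,(S_ℓ)_{s_ℓ}) be a decorated ordered set partition of type Δ_{k,n}, i.e., (S_1,...,S_ℓ) is an ordered set partition of {1,...,n}, the s_j are integers with Σ s_j = k and 1 ≤ s_j ≤ |S_j| - 1 for each j. Then the polytope [ (S_1)_{s_1},...,(S_ℓ)_{s_ℓ} ] ∩ Δ_{k,n}, cut out by x_{S_1∪⋯∪S_p} ≥ s_1 + ⋯ + s_p for p = 1,...,ℓ-1, is nonempty and has dimension n-1 (i.e., full-dimensional in the hyperplane Σ x_i = k). -/
set_option maxHeartbeats 2000000 in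
theorem stmt9 (n ℓ k : ℕ) (hk : 1 ≤ k) (hkn : k ≤ n - 1)
    (S : Fin ℓ → Finset (Fin n)) (s : Fin ℓ → ℕ)
    (hdisj : ∀ p q : Fin ℓ, p ≠ q → Disjoint (S p) (S q))
    (hcover : ∀ m : Fin n, ∃ p : Fin ℓ, m ∈ S p)
    (hne : ∀ p, (S p).Nonempty)
    (hsum : ∑ j, s j = k)
    (hs : ∀ j, 1 ≤ s j ∧ s j ≤ (S j).card - 1) :
    let P : Set (Fin n → ℝ) :=
      {x | (∀ m, 0 ≤ x m ∧ x m ≤ 1) ∧ ∑ m, x m = (k : ℝ) ∧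
        ∀ p : Fin ℓ,
          (∑ q ∈ Finset.Iic p, (s q : ℝ)) ≤ ∑ q ∈ Finset.Iic p, ∑ t ∈ S q, x t}
    P.Nonempty ∧ (affineSpan ℝ P : Set (Fin n → ℝ)) = {x | ∑ m, x m = (k : ℝ)} := by
  classical
  intro P
  have hn2 : 2 ≤ n := by omega
  have hℓ : 0 < ℓ := by
    rcases Nat.eq_zero_or_pos ℓ with h | h
    · subst h
      obtain ⟨p, _⟩ := hcover ⟨0, by omega⟩
      exact p.elim0
    · exact h
  have hℓR : (0:ℝ) < (ℓ:ℝ) := by exact_mod_cast hℓ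
  have hnR : (0:ℝ) < (n:ℝ) := by positivity
  set last : Fin ℓ := ⟨ℓ - 1, by omega⟩ with hlast_def
  have hle_last : ∀ q : Fin ℓ, q ≤ last := by
    intro q
    have := q.isLt
    exact Fin.mk_le_mk.mpr (by omega) |>.trans_eq rfl
  -- block assignment function
  choose f hf using hcover
  have hfS : ∀ (j : Fin ℓ) (m : Fin n), m ∈ S j → f m = j := by
    intro j m hm
    by_contra h
    exact Finset.disjoint_left.mp (hdisj _ _ h) (hf m) hm
  -- cardinalities
  have hcard : ∀ j, 2 ≤ (S j).card := by
    intro j; have := hs j; omega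
  have hcardn : ∀ j, (S j).card ≤ n := by
    intro j
    calc (S j).card ≤ Fintype.card (Fin n) := Finset.card_le_univ _
    _ = n := Fintype.card_fin n
  have hcardR : ∀ j, (2:ℝ) ≤ ((S j).card : ℝ) := fun j => by exact_mod_cast hcard j
  have hcardnR : ∀ j, ((S j).card : ℝ) ≤ (n:ℝ) := fun j => by exact_mod_cast hcardn j
  -- the perturbation
  set δ : ℝ := 1 / (2 * ℓ) with hδ_def
  have hδ : 0 < δ := by positivity
  have hℓ1 : (1:ℝ) ≤ (ℓ:ℝ) := by exact_mod_cast hℓ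
  have hδℓeq : δ * (ℓ:ℝ) = 1/2 := by
    rw [hδ_def]; field_simp
  have hδℓ : δ * ((ℓ:ℝ) - 1) ≤ 1/2 := by nlinarith [hδ.le]
  have hδhalf : δ ≤ 1/2 := by nlinarith [hδ.le]
  set e : Fin ℓ → ℝ := fun j => if j = last then δ * (1 - (ℓ:ℝ)) else δ with he_def
  have he_low : ∀ j, -(1/2 : ℝ) ≤ e j := by
    intro j
    simp only [he_def]
    split
    · nlinarith
    · linarith
  have he_high : ∀ j, e j ≤ δ := by
    intro j
    simp only [he_def]
    split
    · nlinarith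
    · exact le_rfl
  -- bounds on s j + e j
  have hse_low : ∀ j, (1/2 : ℝ) ≤ (s j : ℝ) + e j := by
    intro j
    have h1 : (1:ℝ) ≤ (s j : ℝ) := by exact_mod_cast (hs j).1
    have := he_low j
    linarith
  have hse_high : ∀ j, (s j : ℝ) + e j ≤ ((S j).card : ℝ) - 1/2 := by
    intro j
    have h1 : s j + 1 ≤ (S j).card := by have := hs j; omega
    have h1R : (s j : ℝ) + 1 ≤ ((S j).card : ℝ) := by exact_mod_cast h1
    have := he_high j
    linarith [hδhalf]
  -- the base point
  set g : Fin ℓ → ℝ := fun j => ((s j : ℝ) + e j) / ((S j).card : ℝ) with hg_def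
  set x₀ : Fin n → ℝ := fun m => g (f m) with hx₀_def
  have hg_low : ∀ j, 1 / (2 * (n:ℝ)) ≤ g j := by
    intro j
    rw [hg_def]
    rw [div_le_div_iff₀ (by positivity) (by linarith [hcardR j])]
    nlinarith [hse_low j, hcardnR j, hcardR j]
  have hg_high : ∀ j, g j ≤ 1 - 1 / (2 * (n:ℝ)) := by
    intro j
    rw [hg_def, div_le_iff₀ (by linarith [hcardR j])]
    have h1 : 1 / (2 * (n:ℝ)) * ((S j).card : ℝ) ≤ 1/2 := by
      rw [div_mul_eq_mul_div, div_le_div_iff₀ (by positivity) (by norm_num)]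
      nlinarith [hcardnR j]
    nlinarith [hse_high j]
  -- block sums of x₀
  have hblock : ∀ j, ∑ t ∈ S j, x₀ t = (s j : ℝ) + e j := by
    intro j
    have : ∀ t ∈ S j, x₀ t = g j := by
      intro t ht
      simp only [hx₀_def]
      rw [hfS j t ht]
    rw [Finset.sum_congr rfl this, Finset.sum_const, nsmul_eq_mul, hg_def,
      mul_div_cancel₀]
    have := hcardR j
    intro h; rw [h] at this; norm_num at this
  -- partition sum
  have huniv : Finset.univ.biUnion S = (Finset.univ : Finset (Fin n)) := by
    ext m
    simp only [Finset.mem_biUnion, Finset.mem_univ, true_and, iff_true]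
    exact ⟨f m, hf m⟩
  have hpart : ∀ h : Fin n → ℝ, ∑ j, ∑ t ∈ S j, h t = ∑ m, h m := by
    intro h
    rw [← huniv]
    exact (Finset.sum_biUnion (fun p _ q _ hpq => hdisj p q hpq)).symm
  -- sums of e
  have hIic_last : Finset.Iic last = Finset.univ := by
    ext q; simp [hle_last q]
  have hesum : ∑ j, e j = 0 := by
    rw [← Finset.sum_erase_add _ _ (Finset.mem_univ last)]
    have h1 : ∀ j ∈ Finset.univ.erase last, e j = δ := by
      intro j hj
      simp only [he_def, if_neg (Finset.mem_erase.mp hj).1]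
    rw [Finset.sum_congr rfl h1, Finset.sum_const, nsmul_eq_mul]
    have hcard_erase : (Finset.univ.erase last).card = ℓ - 1 := by
      rw [Finset.card_erase_of_mem (Finset.mem_univ last), Finset.card_univ,
        Fintype.card_fin]
    rw [hcard_erase]
    have : ((ℓ - 1 : ℕ) : ℝ) = (ℓ:ℝ) - 1 := by
      have : (1:ℕ) ≤ ℓ := hℓ
      push_cast [Nat.cast_sub this]
      ring
    rw [this]
    simp only [he_def, if_pos rfl]
    ring
  have hepos : ∀ p : Fin ℓ, p ≠ last → δ ≤ ∑ q ∈ Finset.Iic p, e q := by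
    intro p hp
    have hlast_not : last ∉ Finset.Iic p := by
      intro h
      rw [Finset.mem_Iic] at h
      exact hp (le_antisymm (hle_last p) h)
    have h1 : ∀ q ∈ Finset.Iic p, e q = δ := by
      intro q hq
      have : q ≠ last := fun h => hlast_not (h ▸ hq)
      simp only [he_def, if_neg this]
    rw [Finset.sum_congr rfl h1, Finset.sum_const, nsmul_eq_mul]
    have hpmem : p ∈ Finset.Iic p := Finset.mem_Iic.mpr le_rfl
    have : 1 ≤ (Finset.Iic p).card := Finset.card_pos.mpr ⟨p, hpmem⟩
    have : (1:ℝ) ≤ ((Finset.Iic p).card : ℝ) := by exact_mod_cast this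
    nlinarith
  have henonneg : ∀ p : Fin ℓ, 0 ≤ ∑ q ∈ Finset.Iic p, e q := by
    intro p
    by_cases hp : p = last
    · rw [hp, hIic_last, hesum]
    · linarith [hepos p hp]
  -- x₀ ∈ P
  have hksum : ∑ j, ((s j : ℝ) + e j) = (k : ℝ) := by
    rw [Finset.sum_add_distrib, hesum, add_zero]
    exact_mod_cast congrArg (Nat.cast : ℕ → ℝ) hsum
  have hx₀sum : ∑ m, x₀ m = (k : ℝ) := by
    rw [← hpart x₀, Finset.sum_congr rfl (fun j _ => hblock j), hksum]
  have hx₀P : x₀ ∈ P := by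
    refine ⟨fun m => ⟨?_, ?_⟩, hx₀sum, fun p => ?_⟩
    · have := hg_low (f m)
      have h2 : 0 < 1 / (2 * (n:ℝ)) := by positivity
      simp only [hx₀_def]; linarith
    · have := hg_high (f m)
      have h2 : 0 < 1 / (2 * (n:ℝ)) := by positivity
      simp only [hx₀_def]; linarith
    · rw [Finset.sum_congr rfl (fun q (_ : q ∈ Finset.Iic p) => hblock q),
        Finset.sum_add_distrib]
      linarith [henonneg p]
  constructor
  · exact ⟨x₀, hx₀P⟩
  · apply Set.Subset.antisymm
    · intro x hx
      refine affineSpan_induction hx (fun y hy => hy.2.1) ?_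
      intro c u v w hu hv hw
      simp only [Set.mem_setOf_eq] at *
      simp only [vsub_eq_sub, vadd_eq_add, Pi.add_apply, Pi.smul_apply,
        Pi.sub_apply, smul_eq_mul]
      rw [Finset.sum_add_distrib, ← Finset.mul_sum, Finset.sum_sub_distrib,
        hu, hv, hw]
      ring
    · intro y hy
      have hy' : ∑ m, y m = (k : ℝ) := hy
      obtain ⟨d, hd_def⟩ : ∃ d : Fin n → ℝ, d = fun m => y m - x₀ m := ⟨_, rfl⟩
      have hdsum : ∑ m, d m = 0 := by
        simp only [hd_def]
        rw [Finset.sum_sub_distrib, hy', hx₀sum, sub_self]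
      obtain ⟨B, hB_def⟩ : ∃ B : ℝ, B = (∑ m, |d m|) + 1 := ⟨_, rfl⟩
      have hBpos : 0 < B := by
        have : 0 ≤ ∑ m, |d m| := Finset.sum_nonneg (fun m _ => abs_nonneg _)
        linarith
      have habs_le : ∀ m, |d m| ≤ B := by
        intro m
        have := Finset.single_le_sum (f := fun m => |d m|)
          (fun i _ => abs_nonneg _) (Finset.mem_univ m)
        linarith
      obtain ⟨ε, hε_def⟩ : ∃ ε : ℝ, ε = min (1 / (2 * (n:ℝ))) δ := ⟨_, rfl⟩
      have hεpos : 0 < ε := hε_def ▸ lt_min (by positivity) hδ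
      have hεn : ε ≤ 1 / (2 * (n:ℝ)) := hε_def ▸ min_le_left _ _
      have hεδ : ε ≤ δ := hε_def ▸ min_le_right _ _
      obtain ⟨t, ht_def⟩ : ∃ t : ℝ, t = ε / B := ⟨_, rfl⟩
      have htpos : 0 < t := ht_def ▸ div_pos hεpos hBpos
      obtain ⟨z, hz_def⟩ : ∃ z : Fin n → ℝ, z = fun m => x₀ m + t * d m := ⟨_, rfl⟩
      have htd : ∀ m, |t * d m| ≤ ε := by
        intro m
        rw [abs_mul, abs_of_pos htpos, ht_def, div_mul_eq_mul_div,
          div_le_iff₀ hBpos]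
        nlinarith [habs_le m, abs_nonneg (d m), hεpos.le]
      have hzP : z ∈ P := by
        refine ⟨fun m => ⟨?_, ?_⟩, ?_, fun p => ?_⟩
        · have h1 := (abs_le.mp (htd m)).1
          have h2 := hg_low (f m)
          simp only [hz_def, hx₀_def]
          linarith
        · have h1 := (abs_le.mp (htd m)).2
          have h2 := hg_high (f m)
          simp only [hz_def, hx₀_def]
          linarith
        · simp only [hz_def]
          rw [Finset.sum_add_distrib, hx₀sum, ← Finset.mul_sum, hdsum,
            mul_zero, add_zero]
        · -- partial sum constraint for z
          have hblockz : ∀ q : Fin ℓ, ∑ u ∈ S q, z u =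
              ((s q : ℝ) + e q) + t * ∑ u ∈ S q, d u := by
            intro q
            simp only [hz_def]
            rw [Finset.sum_add_distrib, hblock, ← Finset.mul_sum]
          rw [Finset.sum_congr rfl (fun q (_ : q ∈ Finset.Iic p) => hblockz q),
            Finset.sum_add_distrib, Finset.sum_add_distrib, ← Finset.mul_sum]
          obtain ⟨D, hD_def⟩ : ∃ D : ℝ, D = ∑ q ∈ Finset.Iic p, ∑ u ∈ S q, d u := ⟨_, rfl⟩
          rw [← hD_def]
          have hDabs : |D| ≤ B := by
            have h1 : |D| ≤ ∑ q ∈ Finset.Iic p, |∑ u ∈ S q, d u| := by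
              rw [hD_def]; exact Finset.abs_sum_le_sum_abs _ _
            have h2 : ∀ q ∈ Finset.Iic p, |∑ u ∈ S q, d u| ≤ ∑ u ∈ S q, |d u| :=
              fun q _ => Finset.abs_sum_le_sum_abs _ _
            have h3 : ∑ q ∈ Finset.Iic p, ∑ u ∈ S q, |d u| ≤
                ∑ q, ∑ u ∈ S q, |d u| :=
              Finset.sum_le_sum_of_subset_of_nonneg (Finset.subset_univ _)
                (fun q _ _ => Finset.sum_nonneg (fun u _ => abs_nonneg _))
            have h4 : ∑ q, ∑ u ∈ S q, |d u| = ∑ m, |d m| :=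
              hpart (fun m => |d m|)
            calc |D| ≤ ∑ q ∈ Finset.Iic p, |∑ u ∈ S q, d u| := h1
              _ ≤ ∑ q ∈ Finset.Iic p, ∑ u ∈ S q, |d u| :=
                  Finset.sum_le_sum h2
              _ ≤ ∑ q, ∑ u ∈ S q, |d u| := h3
              _ = ∑ m, |d m| := h4
              _ ≤ B := by rw [hB_def]; linarith
          have htD : |t * D| ≤ ε := by
            rw [abs_mul, abs_of_pos htpos, ht_def, div_mul_eq_mul_div,
              div_le_iff₀ hBpos]
            nlinarith [abs_nonneg D, hεpos.le]
          by_cases hp : p = last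
          · have hD0 : D = 0 := by
              rw [hD_def, hp, hIic_last, hpart d, hdsum]
            rw [hD0, mul_zero, add_zero]
            have : ∑ q ∈ Finset.Iic p, e q = 0 := by rw [hp, hIic_last, hesum]
            linarith [this.ge, this.le]
          · have h1 := hepos p hp
            have h2 := (abs_le.mp htD).1
            linarith
      -- y lies on the line through x₀ and z
      have hyz : y = (1/t) • (z -ᵥ x₀) +ᵥ x₀ := by
        funext m
        simp only [vsub_eq_sub, vadd_eq_add, Pi.add_apply, Pi.smul_apply,
          Pi.sub_apply, smul_eq_mul, hz_def, hd_def]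
        field_simp
        ring
      rw [hyz]
      exact AffineSubspace.smul_vsub_vadd_mem _ (1/t)
        (subset_affineSpan ℝ P hzP) (subset_affineSpan ℝ P hx₀P)
        (subset_affineSpan ℝ P hx₀P)
end

section
/- Let I = {i_1, i_2} with i_1 < i_2 be a 2-element subset of {1,...,n} that is not a cyclic interval. Then the hyperplane x_{i_1+1} + x_{i_1+2} + ⋯ + x_{i_2} = 1 (sum over the cyclic interval from i_1+1 to i_2) intersects the interior of Δ_{2,n}, and splits Δ_{2,n} into the two full-dimensional polytopes {x ∈ Δ_{2,n} : x_S ≥ 1} and {x ∈ Δ_{2,n} : x_{S^c} ≥ 1} where S = {i_1+1,...,i_2}, which intersect exactly in the hyperplane slice. -/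
/-- The cyclic interval `(a+1, ..., b)` in `Fin n`. -/
def cycIoc (n : ℕ) (a b : Fin n) : Finset (Fin n) :=
  Finset.univ.filter (fun x => x ≠ a ∧ (x - a).val ≤ (b - a).val)

lemma fin_sub_val {n : ℕ} [NeZero n] (a b : Fin n) :
    (a - b).val = if b.val ≤ a.val then a.val - b.val else a.val + n - b.val := by
  have ha := a.isLt
  have hb := b.isLt
  rw [Fin.sub_def]
  by_cases h : b.val ≤ a.val
  · rw [if_pos h]
    have : n - b.val + a.val = (a.val - b.val) + n := by omega
    simp only [this, Nat.add_mod_right]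
    exact Nat.mod_eq_of_lt (by omega)
  · rw [if_neg h]
    have : n - b.val + a.val = a.val + n - b.val := by omega
    rw [this]
    exact Nat.mod_eq_of_lt (by omega)

lemma cycIoc_eq_Ioc {n : ℕ} [NeZero n] (i1 i2 : Fin n) (h : i1 < i2) :
    cycIoc n i1 i2 = Finset.Ioc i1 i2 := by
  ext m
  simp only [cycIoc, Finset.mem_filter, Finset.mem_univ, true_and, Finset.mem_Ioc,
    Fin.lt_def, Fin.le_def, fin_sub_val, Ne, Fin.ext_iff]
  have h' : i1.val < i2.val := h
  have hm := m.isLt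
  have h2 := i2.isLt
  rw [if_pos h'.le]
  by_cases hc : i1.val ≤ m.val
  · rw [if_pos hc]; omega
  · rw [if_neg hc]; omega

lemma witness {n : ℕ} (S : Finset (Fin n)) (hk2 : 2 ≤ S.card) (hk2' : S.card + 2 ≤ n)
    (s : ℝ) (hs0 : 0 < s) (hs2 : s < 2) :
    ∃ x : Fin n → ℝ, (∀ m, 0 < x m ∧ x m < 1) ∧ ∑ m, x m = 2 ∧ ∑ t ∈ S, x t = s := by
  set k : ℕ := S.card with hk
  have hck : Sᶜ.card = n - k := by
    rw [Finset.card_compl, Fintype.card_fin]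
  have hkpos : (0:ℝ) < k := by positivity
  have hkR : (2:ℝ) ≤ k := by exact_mod_cast hk2
  have hnkR : (2:ℝ) ≤ (n - k : ℕ) := by
    have : 2 ≤ n - k := by omega
    exact_mod_cast this
  have hnk : (0:ℝ) < (n - k : ℕ) := by linarith
  refine ⟨fun m => if m ∈ S then s / k else (2 - s) / (n - k : ℕ), ?_, ?_, ?_⟩
  · intro m
    by_cases hm : m ∈ S <;> simp only [hm, if_true, if_false]
    · exact ⟨by positivity, by rw [div_lt_one hkpos]; linarith⟩
    · exact ⟨div_pos (by linarith) hnk, by rw [div_lt_one hnk]; linarith⟩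
  · rw [← Finset.sum_add_sum_compl S]
    have e1 : ∑ t ∈ S, (if t ∈ S then s / k else (2 - s) / (n - k : ℕ)) = s := by
      rw [Finset.sum_congr rfl (fun t ht => if_pos ht), Finset.sum_const, nsmul_eq_mul]
      field_simp
      rfl
    have e2 : ∑ t ∈ Sᶜ, (if t ∈ S then s / k else (2 - s) / (n - k : ℕ)) = 2 - s := by
      rw [Finset.sum_congr rfl (fun t ht => if_neg (Finset.mem_compl.mp ht)),
        Finset.sum_const, hck, nsmul_eq_mul]
      field_simp
    rw [e1, e2]; ring
  · rw [Finset.sum_congr rfl (fun t ht => if_pos ht), Finset.sum_const, nsmul_eq_mul]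
    field_simp
    rfl

theorem stmt14 (n : ℕ) [NeZero n] (hn : 4 ≤ n) (i1 i2 : Fin n) (h12 : i1 < i2)
    (hnotint : i1 + 1 ≠ i2 ∧ i2 + 1 ≠ i1) :
    let Δ : Set (Fin n → ℝ) := {x | (∀ m, 0 ≤ x m ∧ x m ≤ 1) ∧ ∑ m, x m = 2}
    let S : Finset (Fin n) := cycIoc n i1 i2
    (∃ x ∈ Δ, (∀ m, 0 < x m ∧ x m < 1) ∧ ∑ t ∈ S, x t = 1) ∧
    ({x ∈ Δ | 1 ≤ ∑ t ∈ S, x t} ∪ {x ∈ Δ | 1 ≤ ∑ t ∈ Sᶜ, x t} = Δ) ∧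
    ({x ∈ Δ | 1 ≤ ∑ t ∈ S, x t} ∩ {x ∈ Δ | 1 ≤ ∑ t ∈ Sᶜ, x t}
        = {x ∈ Δ | ∑ t ∈ S, x t = 1}) ∧
    (∃ x ∈ Δ, (∀ m, 0 < x m ∧ x m < 1) ∧ 1 < ∑ t ∈ S, x t) ∧
    (∃ x ∈ Δ, (∀ m, 0 < x m ∧ x m < 1) ∧ 1 < ∑ t ∈ Sᶜ, x t) := by
  intro Δ S
  have h12' : i1.val < i2.val := h12
  have h2lt := i2.isLt
  have h1n : (1:ℕ) % n = 1 := Nat.mod_eq_of_lt (by omega)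
  have hScard : S.card = i2.val - i1.val := by
    rw [show S = cycIoc n i1 i2 from rfl, cycIoc_eq_Ioc i1 i2 h12, Fin.card_Ioc]
  have hd1 : i1.val + 1 ≠ i2.val := by
    intro h
    apply hnotint.1
    apply Fin.ext
    rw [Fin.add_def, Fin.val_one', h1n, h]
    exact Nat.mod_eq_of_lt i2.isLt
  have hd2 : ¬(i2.val = n - 1 ∧ i1.val = 0) := by
    rintro ⟨h2, h1⟩
    apply hnotint.2
    apply Fin.ext
    rw [Fin.add_def, Fin.val_one', h1n, h2, h1]
    simp [show n - 1 + 1 = n by omega]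
  have hk2 : 2 ≤ S.card := by rw [hScard]; omega
  have hk2' : S.card + 2 ≤ n := by rw [hScard]; omega
  have hsum : ∀ x ∈ Δ, ∑ t ∈ S, x t + ∑ t ∈ Sᶜ, x t = 2 := by
    intro x hx
    rw [Finset.sum_add_sum_compl]
    exact hx.2
  refine ⟨?_, ?_, ?_, ?_, ?_⟩
  · obtain ⟨x, h1, h2, h3⟩ := witness S hk2 hk2' 1 one_pos one_lt_two
    exact ⟨x, ⟨fun m => ⟨(h1 m).1.le, (h1 m).2.le⟩, h2⟩, h1, h3⟩
  · ext x
    simp only [Set.mem_union, Set.mem_setOf_eq]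
    constructor
    · rintro (⟨h, _⟩ | ⟨h, _⟩) <;> exact h
    · intro hx
      have := hsum x hx
      by_cases h : 1 ≤ ∑ t ∈ S, x t
      · exact Or.inl ⟨hx, h⟩
      · exact Or.inr ⟨hx, by linarith⟩
  · ext x
    simp only [Set.mem_inter_iff, Set.mem_setOf_eq]
    constructor
    · rintro ⟨⟨hx, h1⟩, ⟨_, h2⟩⟩
      have := hsum x hx
      exact ⟨hx, by linarith⟩
    · rintro ⟨hx, h1⟩
      have := hsum x hx
      exact ⟨⟨hx, h1.ge⟩, ⟨hx, by linarith⟩⟩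
  · obtain ⟨x, h1, h2, h3⟩ := witness S hk2 hk2' (3/2) (by norm_num) (by norm_num)
    exact ⟨x, ⟨fun m => ⟨(h1 m).1.le, (h1 m).2.le⟩, h2⟩, h1, by rw [h3]; norm_num⟩
  · obtain ⟨x, h1, h2, h3⟩ := witness S hk2 hk2' (1/2) (by norm_num) (by norm_num)
    refine ⟨x, ⟨fun m => ⟨(h1 m).1.le, (h1 m).2.le⟩, h2⟩, h1, ?_⟩
    have h4 := Finset.sum_add_sum_compl S x
    rw [h2, h3] at h4
    linarith
end

section
/- Let S, T ⊆ {1,...,n} with 2 ≤ |S|, |T| ≤ n-2. The two 2-splits of Δ_{2,n} given by the hyperplanes x_S = 1 and x_T = 1 are compatible (i.e., the vertex sets of all four polytopes {x ∈ Δ_{2,n} : x_S ≥ 1 or ≤ 1} ∩ {x ∈ Δ_{2,n} : x_T ≥ 1 or ≤ 1} span matroid polytopes; equivalently, no cell of the common refinement has an edge in a non-root direction) if at least one of the four intersections S∩T, S∩T^c, S^c∩T, S^c∩T^c is empty. -/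
/-- The 0/1 indicator vector of a subset `B ⊆ {1,...,n}`. -/
def ind (n : ℕ) (B : Finset (Fin n)) : Fin n → ℝ :=
  fun i => if i ∈ B then 1 else 0

namespace Stmt15Aux

open Finset

/-- The cell of the common refinement. -/
def cell (n : ℕ) (S T : Finset (Fin n)) (ε1 ε2 : Bool) : Set (Fin n → ℝ) :=
  {x | ((∀ m, 0 ≤ x m ∧ x m ≤ 1) ∧ ∑ m, x m = 2) ∧
    (if ε1 then (1 : ℝ) ≤ ∑ t ∈ S, x t else ∑ t ∈ S, x t ≤ 1) ∧
    (if ε2 then (1 : ℝ) ≤ ∑ t ∈ T, x t else ∑ t ∈ T, x t ≤ 1)}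

def bases (n : ℕ) (S T : Finset (Fin n)) (ε1 ε2 : Bool) : Set (Finset (Fin n)) :=
  {B | B.card = 2 ∧ ind n B ∈ cell n S T ε1 ε2}

def good {n : ℕ} (S T : Finset (Fin n)) (ε1 ε2 : Bool) (a b : Fin n) : Prop :=
  (if ε1 then a ∈ S ∨ b ∈ S else ¬(a ∈ S ∧ b ∈ S)) ∧
  (if ε2 then a ∈ T ∨ b ∈ T else ¬(a ∈ T ∧ b ∈ T))

variable {n : ℕ} {S T : Finset (Fin n)} {ε1 ε2 : Bool}

lemma sum_ind (U B : Finset (Fin n)) :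
    ∑ t ∈ U, ind n B t = ((U ∩ B).card : ℝ) := by
  simp only [ind]
  rw [Finset.sum_boole, Finset.filter_mem_eq_inter]

lemma convex_cell : Convex ℝ (cell n S T ε1 ε2) := by
  intro x hx y hy a b ha hb hab
  obtain ⟨⟨hxbox, hxsum⟩, hxS, hxT⟩ := hx
  obtain ⟨⟨hybox, hysum⟩, hyS, hyT⟩ := hy
  have hcoord : ∀ m, (a • x + b • y) m = a * x m + b * y m := fun m => rfl
  have hsum : ∀ U : Finset (Fin n),
      ∑ t ∈ U, (a • x + b • y) t = a * ∑ t ∈ U, x t + b * ∑ t ∈ U, y t := by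
    intro U
    simp only [hcoord, Finset.sum_add_distrib, Finset.mul_sum]
  refine ⟨⟨fun m => ⟨?_, ?_⟩, ?_⟩, ?_, ?_⟩
  · exact add_nonneg (mul_nonneg ha (hxbox m).1) (mul_nonneg hb (hybox m).1)
  · have h1 := (hxbox m).2; have h2 := (hybox m).2
    rw [hcoord]; nlinarith
  · rw [hsum, hxsum, hysum]; linarith
  · cases ε1 <;> simp only [if_true, if_false, Bool.false_eq_true] at hxS hyS ⊢ <;>
      rw [hsum] <;> nlinarith
  · cases ε2 <;> simp only [if_true, if_false, Bool.false_eq_true] at hxT hyT ⊢ <;>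
      rw [hsum] <;> nlinarith

lemma isCompact_cell : IsCompact (cell n S T ε1 ε2) := by
  have hsub : cell n S T ε1 ε2 ⊆ Set.pi Set.univ (fun _ : Fin n => Set.Icc (0:ℝ) 1) := by
    intro x hx m _
    exact ⟨(hx.1.1 m).1, (hx.1.1 m).2⟩
  have hcont : ∀ U : Finset (Fin n), Continuous (fun x : Fin n → ℝ => ∑ t ∈ U, x t) :=
    fun U => continuous_finset_sum _ fun i _ => continuous_apply i
  have hclosed : IsClosed (cell n S T ε1 ε2) := by
    have h1 : IsClosed {x : Fin n → ℝ | ∀ m, 0 ≤ x m ∧ x m ≤ 1} := by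
      have : {x : Fin n → ℝ | ∀ m, 0 ≤ x m ∧ x m ≤ 1} =
          ⋂ m, ({x : Fin n → ℝ | 0 ≤ x m} ∩ {x | x m ≤ 1}) := by
        ext x; simp [Set.mem_iInter]
      rw [this]
      exact isClosed_iInter fun m =>
        ((isClosed_le continuous_const (continuous_apply m)).inter
          (isClosed_le (continuous_apply m) continuous_const))
    have h2 : IsClosed {x : Fin n → ℝ | ∑ m, x m = 2} :=
      isClosed_eq (hcont Finset.univ) continuous_const
    have h3 : IsClosed {x : Fin n → ℝ |
        if ε1 then (1 : ℝ) ≤ ∑ t ∈ S, x t else ∑ t ∈ S, x t ≤ 1} := by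
      cases ε1 <;> simp only [if_true, if_false, Bool.false_eq_true]
      · exact isClosed_le (hcont S) continuous_const
      · exact isClosed_le continuous_const (hcont S)
    have h4 : IsClosed {x : Fin n → ℝ |
        if ε2 then (1 : ℝ) ≤ ∑ t ∈ T, x t else ∑ t ∈ T, x t ≤ 1} := by
      cases ε2 <;> simp only [if_true, if_false, Bool.false_eq_true]
      · exact isClosed_le (hcont T) continuous_const
      · exact isClosed_le continuous_const (hcont T)
    have : cell n S T ε1 ε2 =
        ({x : Fin n → ℝ | ∀ m, 0 ≤ x m ∧ x m ≤ 1} ∩ {x | ∑ m, x m = 2}) ∩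
        ({x : Fin n → ℝ | if ε1 then (1 : ℝ) ≤ ∑ t ∈ S, x t else ∑ t ∈ S, x t ≤ 1} ∩
         {x : Fin n → ℝ | if ε2 then (1 : ℝ) ≤ ∑ t ∈ T, x t else ∑ t ∈ T, x t ≤ 1}) := by
      ext x
      simp only [cell, Set.mem_setOf_eq, Set.mem_inter_iff]
    rw [this]
    exact ((h1.inter h2).inter (h3.inter h4))
  exact (isCompact_univ_pi fun _ => isCompact_Icc).of_isClosed_subset hclosed hsub

/-- If all but one coordinate of an integral-sum block are 0/1, the last is too. -/
lemma exists_other_frac (x : Fin n → ℝ) (U : Finset (Fin n)) (c : ℤ)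
    (hsum : ∑ m ∈ U, x m = (c : ℝ)) (i : Fin n) (hi : i ∈ U)
    (h0 : 0 < x i) (h1 : x i < 1)
    (hbox : ∀ m, 0 ≤ x m ∧ x m ≤ 1) :
    ∃ j ∈ U, j ≠ i ∧ 0 < x j ∧ x j < 1 := by
  by_contra hcon
  push_neg at hcon
  have hint : ∀ j ∈ U.erase i, x j = 0 ∨ x j = 1 := by
    intro j hj
    obtain ⟨hji, hjU⟩ := Finset.mem_erase.mp hj
    rcases lt_or_ge 0 (x j) with h | h
    · exact Or.inr (le_antisymm (hbox j).2 (hcon j hjU hji h))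
    · exact Or.inl (le_antisymm h (hbox j).1)
  have hval : ∀ j ∈ U.erase i, x j = ((if x j = 1 then (1:ℤ) else 0 : ℤ) : ℝ) := by
    intro j hj
    rcases hint j hj with h | h <;> simp [h]
  have hsum2 : ∑ j ∈ U.erase i, x j =
      ((∑ j ∈ U.erase i, if x j = 1 then (1:ℤ) else 0 : ℤ) : ℝ) := by
    rw [Finset.sum_congr rfl hval]
    push_cast
    rfl
  have hxi : x i = (c : ℝ) - ((∑ j ∈ U.erase i, if x j = 1 then (1:ℤ) else 0 : ℤ) : ℝ) := by
    rw [← hsum2]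
    have hadd := Finset.add_sum_erase U x hi
    linarith [hsum]
  rw [hxi] at h0 h1
  have hz0 : (0 : ℤ) < c - (∑ j ∈ U.erase i, if x j = 1 then (1:ℤ) else 0) := by
    exact_mod_cast h0
  have hz1 : c - (∑ j ∈ U.erase i, if x j = 1 then (1:ℤ) else 0) < 1 := by
    exact_mod_cast h1
  omega

lemma find_in_block (x : Fin n → ℝ) (hbox : ∀ m, 0 ≤ x m ∧ x m ≤ 1)
    (U : Finset (Fin n)) (c : ℤ) (hU : ∑ m ∈ U, x m = (c : ℝ))
    (i : Fin n) (hi : i ∈ U) (h0 : 0 < x i) (h1 : x i < 1) :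
    ∃ j ∈ U, j ≠ i ∧ 0 < x j ∧ x j < 1 :=
  exists_other_frac x U c hU i hi h0 h1 hbox

/-- Common tail for the doubly tight case. -/
lemma tight_tail (x : Fin n → ℝ) (hbox : ∀ m, 0 ≤ x m ∧ x m ≤ 1)
    (i : Fin n) (h0 : 0 < x i) (h1 : x i < 1)
    (U1 U2 : Finset (Fin n))
    (hz : ∀ m, m ∉ U1 → m ∉ U2 → x m = 0)
    (hU1 : ∑ m ∈ U1, x m = 1) (hU2 : ∑ m ∈ U2, x m = 1)
    (hc1S : ∀ a ∈ U1, ∀ b ∈ U1, (a ∈ S ↔ b ∈ S))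
    (hc1T : ∀ a ∈ U1, ∀ b ∈ U1, (a ∈ T ↔ b ∈ T))
    (hc2S : ∀ a ∈ U2, ∀ b ∈ U2, (a ∈ S ↔ b ∈ S))
    (hc2T : ∀ a ∈ U2, ∀ b ∈ U2, (a ∈ T ↔ b ∈ T)) :
    ∃ j, j ≠ i ∧ 0 < x j ∧ x j < 1 ∧ ((i ∈ S) ↔ (j ∈ S)) ∧ ((i ∈ T) ↔ (j ∈ T)) := by
  have hi12 : i ∈ U1 ∨ i ∈ U2 := by
    by_contra h
    push_neg at h
    exact absurd (hz i h.1 h.2) (by linarith)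
  have h1' : (1 : ℝ) = ((1 : ℤ) : ℝ) := by norm_num
  rcases hi12 with hi | hi
  · obtain ⟨j, hjU, hji, hj0, hj1⟩ :=
      find_in_block x hbox U1 1 (by rw [hU1]; norm_num) i hi h0 h1
    exact ⟨j, hji, hj0, hj1, hc1S i hi j hjU, hc1T i hi j hjU⟩
  · obtain ⟨j, hjU, hji, hj0, hj1⟩ :=
      find_in_block x hbox U2 1 (by rw [hU2]; norm_num) i hi h0 h1
    exact ⟨j, hji, hj0, hj1, hc2S i hi j hjU, hc2T i hi j hjU⟩

lemma exists_dir (hemp : S ∩ T = ∅ ∨ S ∩ Tᶜ = ∅ ∨ Sᶜ ∩ T = ∅ ∨ Sᶜ ∩ Tᶜ = ∅)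
    (x : Fin n → ℝ) (hbox : ∀ m, 0 ≤ x m ∧ x m ≤ 1) (hsum : ∑ m, x m = 2)
    (i : Fin n) (h0 : 0 < x i) (h1 : x i < 1) :
    ∃ j, j ≠ i ∧ 0 < x j ∧ x j < 1 ∧
      ((∑ t ∈ S, x t) = 1 → ((i ∈ S) ↔ (j ∈ S))) ∧
      ((∑ t ∈ T, x t) = 1 → ((i ∈ T) ↔ (j ∈ T))) := by
  have hcompl : ∀ U : Finset (Fin n), ∑ m ∈ Uᶜ, x m = 2 - ∑ m ∈ U, x m := by
    intro U
    have := Finset.sum_add_sum_compl U x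
    rw [hsum] at this
    linarith
  by_cases hS : ∑ t ∈ S, x t = 1
  · by_cases hT : ∑ t ∈ T, x t = 1
    · -- doubly tight case
      have key : ∃ j, j ≠ i ∧ 0 < x j ∧ x j < 1 ∧ ((i ∈ S) ↔ (j ∈ S)) ∧ ((i ∈ T) ↔ (j ∈ T)) := by
        rcases hemp with h | h | h | h
        · -- S ∩ T = ∅
          have hd : ∀ z : Fin n, z ∈ S → z ∉ T := by
            intro z hz hz'
            exact Finset.eq_empty_iff_forall_notMem.mp h z (Finset.mem_inter.mpr ⟨hz, hz'⟩)
          have hdisj : Disjoint S T := Finset.disjoint_left.mpr hd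
          have hrest : ∑ m ∈ (S ∪ T)ᶜ, x m = 0 := by
            rw [hcompl, Finset.sum_union hdisj, hS, hT]; ring
          have hz : ∀ m, m ∉ S → m ∉ T → x m = 0 := by
            intro m hm1 hm2
            exact (Finset.sum_eq_zero_iff_of_nonneg (fun k _ => (hbox k).1)).mp hrest m
              (by simp [hm1, hm2])
          exact tight_tail x hbox i h0 h1 S T hz hS hT
            (fun a ha b hb => iff_of_true ha hb)
            (fun a ha b hb => iff_of_false (hd a ha) (hd b hb))
            (fun a ha b hb => iff_of_false (fun h' => hd a h' ha) (fun h' => hd b h' hb))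
            (fun a ha b hb => iff_of_true ha hb)
        · -- S ⊆ T
          have hsub : S ⊆ T := by
            intro z hz
            by_contra hz'
            exact Finset.eq_empty_iff_forall_notMem.mp h z
              (Finset.mem_inter.mpr ⟨hz, Finset.mem_compl.mpr hz'⟩)
          have hU2 : ∑ m ∈ Tᶜ, x m = 1 := by rw [hcompl, hT]; ring
          have hrest : ∑ m ∈ T \ S, x m = 0 := by
            have := Finset.sum_sdiff (f := x) hsub
            rw [hS, hT] at this
            linarith
          have hz : ∀ m, m ∉ S → m ∉ Tᶜ → x m = 0 := by
            intro m hm1 hm2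
            exact (Finset.sum_eq_zero_iff_of_nonneg (fun k _ => (hbox k).1)).mp hrest m
              (Finset.mem_sdiff.mpr ⟨by simpa using hm2, hm1⟩)
          exact tight_tail x hbox i h0 h1 S Tᶜ hz hS hU2
            (fun a ha b hb => iff_of_true ha hb)
            (fun a ha b hb => iff_of_true (hsub ha) (hsub hb))
            (fun a ha b hb => iff_of_false
              (fun h' => Finset.mem_compl.mp ha (hsub h'))
              (fun h' => Finset.mem_compl.mp hb (hsub h')))
            (fun a ha b hb => iff_of_false (Finset.mem_compl.mp ha) (Finset.mem_compl.mp hb))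
        · -- T ⊆ S
          have hsub : T ⊆ S := by
            intro z hz
            by_contra hz'
            exact Finset.eq_empty_iff_forall_notMem.mp h z
              (Finset.mem_inter.mpr ⟨Finset.mem_compl.mpr hz', hz⟩)
          have hU2 : ∑ m ∈ Sᶜ, x m = 1 := by rw [hcompl, hS]; ring
          have hrest : ∑ m ∈ S \ T, x m = 0 := by
            have := Finset.sum_sdiff (f := x) hsub
            rw [hS, hT] at this
            linarith
          have hz : ∀ m, m ∉ T → m ∉ Sᶜ → x m = 0 := by
            intro m hm1 hm2
            exact (Finset.sum_eq_zero_iff_of_nonneg (fun k _ => (hbox k).1)).mp hrest m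
              (Finset.mem_sdiff.mpr ⟨by simpa using hm2, hm1⟩)
          exact tight_tail x hbox i h0 h1 T Sᶜ hz hT hU2
            (fun a ha b hb => iff_of_true (hsub ha) (hsub hb))
            (fun a ha b hb => iff_of_true ha hb)
            (fun a ha b hb => iff_of_false (Finset.mem_compl.mp ha) (Finset.mem_compl.mp hb))
            (fun a ha b hb => iff_of_false
              (fun h' => Finset.mem_compl.mp ha (hsub h'))
              (fun h' => Finset.mem_compl.mp hb (hsub h')))
        · -- S ∪ T = univ
          have hcover : ∀ z : Fin n, z ∈ S ∨ z ∈ T := by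
            intro z
            by_contra hz
            push_neg at hz
            exact Finset.eq_empty_iff_forall_notMem.mp h z
              (Finset.mem_inter.mpr ⟨Finset.mem_compl.mpr hz.1, Finset.mem_compl.mpr hz.2⟩)
          have huniv : S ∪ T = Finset.univ :=
            Finset.eq_univ_iff_forall.mpr fun z => Finset.mem_union.mpr (hcover z)
          have hsumST : ∑ m ∈ S ∪ T, x m = 2 := by rw [huniv]; exact hsum
          have hint0 : ∑ m ∈ S ∩ T, x m = 0 := by
            have := Finset.sum_union_inter (s₁ := S) (s₂ := T) (f := x)
            rw [hsumST, hS, hT] at this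
            linarith
          have hz0 : ∀ m, m ∈ S → m ∈ T → x m = 0 := by
            intro m hm1 hm2
            exact (Finset.sum_eq_zero_iff_of_nonneg (fun k _ => (hbox k).1)).mp hint0 m
              (Finset.mem_inter.mpr ⟨hm1, hm2⟩)
          have hsdS : ∑ m ∈ S \ T, x m = 1 := by
            have h' := Finset.sum_sdiff (f := x) (Finset.inter_subset_left (s₁ := S) (s₂ := T))
            rw [Finset.sdiff_inter_self_left, hint0, hS] at h'
            linarith
          have hsdT : ∑ m ∈ T \ S, x m = 1 := by
            have h' := Finset.sum_sdiff (f := x) (Finset.inter_subset_left (s₁ := T) (s₂ := S))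
            rw [Finset.sdiff_inter_self_left, Finset.inter_comm, hint0, hT] at h'
            linarith
          have hz : ∀ m, m ∉ S \ T → m ∉ T \ S → x m = 0 := by
            intro m hm1 hm2
            rcases hcover m with hm | hm
            · have hmT : m ∈ T := by
                by_contra hmT
                exact hm1 (Finset.mem_sdiff.mpr ⟨hm, hmT⟩)
              exact hz0 m hm hmT
            · have hmS : m ∈ S := by
                by_contra hmS
                exact hm2 (Finset.mem_sdiff.mpr ⟨hm, hmS⟩)
              exact hz0 m hmS hm
          exact tight_tail x hbox i h0 h1 (S \ T) (T \ S) hz hsdS hsdT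
            (fun a ha b hb => iff_of_true (Finset.mem_sdiff.mp ha).1 (Finset.mem_sdiff.mp hb).1)
            (fun a ha b hb => iff_of_false (Finset.mem_sdiff.mp ha).2 (Finset.mem_sdiff.mp hb).2)
            (fun a ha b hb => iff_of_false (Finset.mem_sdiff.mp ha).2 (Finset.mem_sdiff.mp hb).2)
            (fun a ha b hb => iff_of_true (Finset.mem_sdiff.mp ha).1 (Finset.mem_sdiff.mp hb).1)
      obtain ⟨j, hj, hj0, hj1, hjS, hjT⟩ := key
      exact ⟨j, hj, hj0, hj1, fun _ => hjS, fun _ => hjT⟩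
    · -- only S tight
      by_cases hiS : i ∈ S
      · obtain ⟨j, hjU, hji, hj0, hj1⟩ := find_in_block x hbox S 1
          (by rw [hS]; norm_num) i hiS h0 h1
        exact ⟨j, hji, hj0, hj1, fun _ => iff_of_true hiS hjU, fun h => absurd h hT⟩
      · obtain ⟨j, hjU, hji, hj0, hj1⟩ := find_in_block x hbox Sᶜ 1
          (by rw [hcompl, hS]; norm_num) i (Finset.mem_compl.mpr hiS) h0 h1
        exact ⟨j, hji, hj0, hj1, fun _ => iff_of_false hiS (Finset.mem_compl.mp hjU),
          fun h => absurd h hT⟩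
  · by_cases hT : ∑ t ∈ T, x t = 1
    · by_cases hiT : i ∈ T
      · obtain ⟨j, hjU, hji, hj0, hj1⟩ := find_in_block x hbox T 1
          (by rw [hT]; norm_num) i hiT h0 h1
        exact ⟨j, hji, hj0, hj1, fun h => absurd h hS, fun _ => iff_of_true hiT hjU⟩
      · obtain ⟨j, hjU, hji, hj0, hj1⟩ := find_in_block x hbox Tᶜ 1
          (by rw [hcompl, hT]; norm_num) i (Finset.mem_compl.mpr hiT) h0 h1
        exact ⟨j, hji, hj0, hj1, fun h => absurd h hS,
          fun _ => iff_of_false hiT (Finset.mem_compl.mp hjU)⟩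
    · obtain ⟨j, hjU, hji, hj0, hj1⟩ := find_in_block x hbox Finset.univ 2
        (by rw [hsum]; norm_num) i (Finset.mem_univ i) h0 h1
      exact ⟨j, hji, hj0, hj1, fun h => absurd h hS, fun h => absurd h hT⟩

lemma pert_mem (x : Fin n → ℝ) (hx : x ∈ cell n S T ε1 ε2)
    (m j : Fin n) (hmj : m ≠ j) (t : ℝ) (ht : 0 ≤ t)
    (h1 : t ≤ 1 - x m) (h2 : t ≤ x j)
    (hS : (m ∈ S ↔ j ∈ S) ∨
      (if ε1 then 1 + t ≤ ∑ u ∈ S, x u else ∑ u ∈ S, x u ≤ 1 - t))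
    (hT : (m ∈ T ↔ j ∈ T) ∨
      (if ε2 then 1 + t ≤ ∑ u ∈ T, x u else ∑ u ∈ T, x u ≤ 1 - t)) :
    (fun k => x k + t * ((if k = m then 1 else 0) - (if k = j then 1 else 0)))
      ∈ cell n S T ε1 ε2 := by
  obtain ⟨⟨hbox, hsum⟩, hxS, hxT⟩ := hx
  have hsumU : ∀ U : Finset (Fin n),
      ∑ k ∈ U, (x k + t * ((if k = m then (1:ℝ) else 0) - (if k = j then 1 else 0)))
        = ∑ k ∈ U, x k + t * ((if m ∈ U then (1:ℝ) else 0) - (if j ∈ U then 1 else 0)) := by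
    intro U
    rw [Finset.sum_add_distrib, ← Finset.mul_sum, Finset.sum_sub_distrib,
      Finset.sum_ite_eq' U m (fun _ => (1:ℝ)), Finset.sum_ite_eq' U j (fun _ => (1:ℝ))]
  have key : ∀ (U : Finset (Fin n)) (ε : Bool),
      (if ε then (1:ℝ) ≤ ∑ u ∈ U, x u else ∑ u ∈ U, x u ≤ 1) →
      ((m ∈ U ↔ j ∈ U) ∨ (if ε then 1 + t ≤ ∑ u ∈ U, x u else ∑ u ∈ U, x u ≤ 1 - t)) →
      (if ε then (1:ℝ) ≤ ∑ k ∈ U,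
          (x k + t * ((if k = m then (1:ℝ) else 0) - (if k = j then 1 else 0)))
        else ∑ k ∈ U,
          (x k + t * ((if k = m then (1:ℝ) else 0) - (if k = j then 1 else 0))) ≤ 1) := by
    intro U ε hcon hcase
    have hd1 : (-1 : ℝ) ≤ (if m ∈ U then (1:ℝ) else 0) - (if j ∈ U then 1 else 0) := by
      split_ifs <;> norm_num
    have hd2 : (if m ∈ U then (1:ℝ) else 0) - (if j ∈ U then 1 else 0) ≤ 1 := by
      split_ifs <;> norm_num
    rcases hcase with hiff | hslack
    · have hzero : (if m ∈ U then (1:ℝ) else 0) - (if j ∈ U then 1 else 0) = 0 := by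
        by_cases hmU : m ∈ U
        · simp [hmU, hiff.mp hmU]
        · have hjU : j ∉ U := fun h => hmU (hiff.mpr h)
          simp [hmU, hjU]
      cases ε <;> simp only [if_true, if_false, Bool.false_eq_true] at hcon ⊢ <;>
        rw [hsumU, hzero] <;> simp only [mul_zero, add_zero] <;> exact hcon
    · have hb1 := mul_le_mul_of_nonneg_left hd1 ht
      have hb2 := mul_le_mul_of_nonneg_left hd2 ht
      cases ε <;> simp only [if_true, if_false, Bool.false_eq_true] at hcon hslack ⊢ <;>
        rw [hsumU] <;> nlinarith
  refine ⟨⟨fun k => ?_, ?_⟩, key S ε1 hxS hS, key T ε2 hxT hT⟩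
  · dsimp only
    rcases eq_or_ne k m with rfl | hkm
    · simp only [if_pos rfl, if_neg hmj, if_true, sub_zero, mul_one]
      constructor
      · nlinarith [(hbox k).1]
      · nlinarith
    · rcases eq_or_ne k j with rfl | hkj
      · simp only [if_neg hkm, if_pos rfl, if_true, zero_sub, mul_neg, mul_one]
        constructor
        · nlinarith
        · nlinarith [(hbox k).2]
      · simp only [if_neg hkm, if_neg hkj]
        constructor
        · nlinarith [(hbox k).1]
        · nlinarith [(hbox k).2]
  · rw [hsumU]
    simp only [Finset.mem_univ, if_true, sub_self, mul_zero, add_zero]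
    exact hsum

lemma not_extreme_of_dir (x : Fin n → ℝ) (hxC : x ∈ cell n S T ε1 ε2)
    (m j : Fin n) (hmj : m ≠ j) (t : ℝ) (ht : 0 < t)
    (hb1 : t ≤ 1 - x m) (hb2 : t ≤ x j) (hb3 : t ≤ 1 - x j) (hb4 : t ≤ x m)
    (hS : (m ∈ S ↔ j ∈ S) ∨
      (if ε1 then 1 + t ≤ ∑ u ∈ S, x u else ∑ u ∈ S, x u ≤ 1 - t))
    (hT : (m ∈ T ↔ j ∈ T) ∨
      (if ε2 then 1 + t ≤ ∑ u ∈ T, x u else ∑ u ∈ T, x u ≤ 1 - t)) :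
    x ∉ (cell n S T ε1 ε2).extremePoints ℝ := by
  intro hext
  set y : Fin n → ℝ :=
    fun k => x k + t * ((if k = m then 1 else 0) - (if k = j then 1 else 0)) with hy
  set z : Fin n → ℝ :=
    fun k => x k + t * ((if k = j then 1 else 0) - (if k = m then 1 else 0)) with hz
  have hyC : y ∈ cell n S T ε1 ε2 := pert_mem x hxC m j hmj t ht.le hb1 hb2 hS hT
  have hzC : z ∈ cell n S T ε1 ε2 := pert_mem x hxC j m (Ne.symm hmj) t ht.le hb3 hb4
    (hS.imp Iff.symm id) (hT.imp Iff.symm id)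
  have hseg : x ∈ openSegment ℝ y z := by
    refine ⟨1/2, 1/2, by norm_num, by norm_num, by norm_num, ?_⟩
    funext k
    show (1/2 : ℝ) * y k + (1/2 : ℝ) * z k = x k
    rw [hy, hz]
    ring
  have hcontra := (hext.2 hyC hzC hseg)
  have : y m = x m := congrFun hcontra m
  rw [hy] at this
  simp only [if_pos rfl, if_neg hmj, if_true, sub_zero, mul_one] at this
  linarith

lemma extreme_subset (hemp : S ∩ T = ∅ ∨ S ∩ Tᶜ = ∅ ∨ Sᶜ ∩ T = ∅ ∨ Sᶜ ∩ Tᶜ = ∅) :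
    (cell n S T ε1 ε2).extremePoints ℝ ⊆ ind n '' bases n S T ε1 ε2 := by
  intro x hx
  have hxC := hx.1
  by_cases hint : ∀ m, x m = 0 ∨ x m = 1
  · have hxeq : x = ind n (Finset.univ.filter fun m => x m = 1) := by
      funext k
      rcases hint k with h | h <;> simp [ind, h]
    refine ⟨_, ⟨?_, ?_⟩, hxeq.symm⟩
    · have hs := hxC.1.2
      rw [hxeq, sum_ind, Finset.univ_inter] at hs
      exact_mod_cast hs
    · rw [← hxeq]
      exact hxC
  · exfalso
    push_neg at hint
    obtain ⟨m, hm0, hm1⟩ := hint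
    have hbox := hxC.1.1
    have h0 : 0 < x m := lt_of_le_of_ne (hbox m).1 (Ne.symm hm0)
    have h1 : x m < 1 := lt_of_le_of_ne (hbox m).2 hm1
    obtain ⟨j, hjm, hj0, hj1, hjS, hjT⟩ := exists_dir hemp x hbox hxC.1.2 m h0 h1
    have hS' : ∃ tS : ℝ, 0 < tS ∧ ∀ t' : ℝ, t' ≤ tS →
        ((m ∈ S ↔ j ∈ S) ∨ (if ε1 then 1 + t' ≤ ∑ u ∈ S, x u else ∑ u ∈ S, x u ≤ 1 - t')) := by
      by_cases hiff : (m ∈ S ↔ j ∈ S)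
      · exact ⟨1, one_pos, fun t' _ => Or.inl hiff⟩
      · have hne : ∑ u ∈ S, x u ≠ 1 := fun h => hiff (hjS h)
        have hxS := hxC.2.1
        cases ε1
        · simp only [Bool.false_eq_true, if_false] at hxS ⊢
          have hlt : ∑ u ∈ S, x u < 1 := lt_of_le_of_ne hxS hne
          exact ⟨1 - ∑ u ∈ S, x u, by linarith, fun t' ht' => Or.inr (by linarith)⟩
        · simp only [if_true] at hxS ⊢
          have hlt : 1 < ∑ u ∈ S, x u := lt_of_le_of_ne hxS (Ne.symm hne)
          exact ⟨(∑ u ∈ S, x u) - 1, by linarith, fun t' ht' => Or.inr (by linarith)⟩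
    have hT' : ∃ tT : ℝ, 0 < tT ∧ ∀ t' : ℝ, t' ≤ tT →
        ((m ∈ T ↔ j ∈ T) ∨ (if ε2 then 1 + t' ≤ ∑ u ∈ T, x u else ∑ u ∈ T, x u ≤ 1 - t')) := by
      by_cases hiff : (m ∈ T ↔ j ∈ T)
      · exact ⟨1, one_pos, fun t' _ => Or.inl hiff⟩
      · have hne : ∑ u ∈ T, x u ≠ 1 := fun h => hiff (hjT h)
        have hxT := hxC.2.2
        cases ε2
        · simp only [Bool.false_eq_true, if_false] at hxT ⊢
          have hlt : ∑ u ∈ T, x u < 1 := lt_of_le_of_ne hxT hne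
          exact ⟨1 - ∑ u ∈ T, x u, by linarith, fun t' ht' => Or.inr (by linarith)⟩
        · simp only [if_true] at hxT ⊢
          have hlt : 1 < ∑ u ∈ T, x u := lt_of_le_of_ne hxT (Ne.symm hne)
          exact ⟨(∑ u ∈ T, x u) - 1, by linarith, fun t' ht' => Or.inr (by linarith)⟩
    obtain ⟨tS, htS0, htS⟩ := hS'
    obtain ⟨tT, htT0, htT⟩ := hT'
    set t := min (min (x m) (1 - x m)) (min (min (x j) (1 - x j)) (min tS tT)) with htdef
    have ht0 : 0 < t := by
      simp only [htdef, lt_min_iff]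
      exact ⟨⟨h0, by linarith⟩, ⟨hj0, by linarith⟩, htS0, htT0⟩
    have htxm : t ≤ x m := le_trans (min_le_left _ _) (min_le_left _ _)
    have htxm' : t ≤ 1 - x m := le_trans (min_le_left _ _) (min_le_right _ _)
    have htxj : t ≤ x j :=
      le_trans (min_le_right _ _) (le_trans (min_le_left _ _) (min_le_left _ _))
    have htxj' : t ≤ 1 - x j :=
      le_trans (min_le_right _ _) (le_trans (min_le_left _ _) (min_le_right _ _))
    have httS : t ≤ tS :=
      le_trans (min_le_right _ _) (le_trans (min_le_right _ _) (min_le_left _ _))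
    have httT : t ≤ tT :=
      le_trans (min_le_right _ _) (le_trans (min_le_right _ _) (min_le_right _ _))
    exact not_extreme_of_dir x hxC m j (Ne.symm hjm) t ht0 htxm' htxj htxj' htxm
      (htS t httS) (htT t httT) hx

lemma cell_eq_hull (hemp : S ∩ T = ∅ ∨ S ∩ Tᶜ = ∅ ∨ Sᶜ ∩ T = ∅ ∨ Sᶜ ∩ Tᶜ = ∅) :
    cell n S T ε1 ε2 = convexHull ℝ (ind n '' bases n S T ε1 ε2) := by
  apply Set.Subset.antisymm
  · have hKM := closure_convexHull_extremePoints
      (isCompact_cell (S := S) (T := T) (ε1 := ε1) (ε2 := ε2)) convex_cell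
    calc cell n S T ε1 ε2
        = closure (convexHull ℝ ((cell n S T ε1 ε2).extremePoints ℝ)) := hKM.symm
      _ ⊆ closure (convexHull ℝ (ind n '' bases n S T ε1 ε2)) :=
          closure_mono (convexHull_mono (extreme_subset hemp))
      _ = convexHull ℝ (ind n '' bases n S T ε1 ε2) :=
          IsClosed.closure_eq (((Set.toFinite _).image (ind n)).isClosed_convexHull (𝕜 := ℝ))
  · refine convexHull_min ?_ convex_cell
    rintro y ⟨B, hB, rfl⟩
    exact hB.2

lemma pair_card_facts {a b : Fin n} (hab : a ≠ b) (U : Finset (Fin n)) :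
    ((1 ≤ (U ∩ {a, b}).card ↔ (a ∈ U ∨ b ∈ U)) ∧
     ((U ∩ {a, b}).card ≤ 1 ↔ ¬(a ∈ U ∧ b ∈ U))) := by
  rw [Finset.inter_comm, ← Finset.filter_mem_eq_inter]
  by_cases ha : a ∈ U <;> by_cases hb : b ∈ U <;>
    simp [Finset.filter_insert, Finset.filter_singleton, ha, hb, hab]

lemma ind_mem_cell_iff {B : Finset (Fin n)} (hB : B.card = 2) :
    ind n B ∈ cell n S T ε1 ε2 ↔
      (if ε1 then 1 ≤ (S ∩ B).card else (S ∩ B).card ≤ 1) ∧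
      (if ε2 then 1 ≤ (T ∩ B).card else (T ∩ B).card ≤ 1) := by
  have hbox : ∀ m, 0 ≤ ind n B m ∧ ind n B m ≤ 1 := fun m => by
    unfold ind; split <;> norm_num
  have hsum2 : ∑ m, ind n B m = 2 := by
    rw [sum_ind, Finset.univ_inter, hB]; norm_num
  unfold cell
  rw [Set.mem_setOf_eq]
  simp only [sum_ind, and_iff_right (And.intro hbox hsum2)]
  cases ε1 <;> cases ε2 <;>
    simp [Nat.one_le_cast, Nat.cast_le_one] <;>
    exact fun _ _ => ⟨hbox, by rw [hB]; norm_num⟩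

lemma pair_mem_bases_iff {a b : Fin n} (hab : a ≠ b) :
    ({a, b} : Finset (Fin n)) ∈ bases n S T ε1 ε2 ↔ good S T ε1 ε2 a b := by
  have hcard : ({a, b} : Finset (Fin n)).card = 2 := Finset.card_pair hab
  have h1 := pair_card_facts hab S
  have h2 := pair_card_facts hab T
  have hmem : ({a, b} : Finset (Fin n)) ∈ bases n S T ε1 ε2 ↔
      (if ε1 then 1 ≤ (S ∩ {a, b}).card else (S ∩ {a, b}).card ≤ 1) ∧
      (if ε2 then 1 ≤ (T ∩ {a, b}).card else (T ∩ {a, b}).card ≤ 1) := by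
    unfold bases
    rw [Set.mem_setOf_eq, and_iff_right hcard, ind_mem_cell_iff hcard]
  rw [hmem]
  unfold good
  cases ε1 <;> cases ε2 <;> simp only [if_true, if_false, Bool.false_eq_true]
  · exact and_congr h1.2 h2.2
  · exact and_congr h1.2 h2.1
  · exact and_congr h1.1 h2.2
  · exact and_congr h1.1 h2.1

def goodb (e1 e2 aS aT bS bT : Bool) : Bool :=
  (if e1 then aS || bS else !(aS && bS)) && (if e2 then aT || bT else !(aT && bT))

def okb (h : Fin 4) (zS zT : Bool) : Bool :=
  match h with
  | 0 => !(zS && zT)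
  | 1 => !zS || zT
  | 2 => !zT || zS
  | 3 => zS || zT

lemma bool_logic : ∀ (h : Fin 4) (e1 e2 iS iT aS aT b1S b1T b2S b2T : Bool),
    okb h iS iT = true → okb h aS aT = true → okb h b1S b1T = true → okb h b2S b2T = true →
    goodb e1 e2 iS iT aS aT = true → goodb e1 e2 b1S b1T b2S b2T = true →
    (goodb e1 e2 aS aT b1S b1T || goodb e1 e2 aS aT b2S b2T) = true := by decide

lemma good_iff_goodb (a b : Fin n) :
    good S T ε1 ε2 a b ↔
      goodb ε1 ε2 (decide (a ∈ S)) (decide (a ∈ T)) (decide (b ∈ S)) (decide (b ∈ T)) = true := by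
  unfold good goodb
  cases ε1 <;> cases ε2 <;> simp <;> tauto

lemma exchange_logic (hemp : S ∩ T = ∅ ∨ S ∩ Tᶜ = ∅ ∨ Sᶜ ∩ T = ∅ ∨ Sᶜ ∩ Tᶜ = ∅)
    (i a b1 b2 : Fin n)
    (h1 : good S T ε1 ε2 i a) (h2 : good S T ε1 ε2 b1 b2) :
    good S T ε1 ε2 a b1 ∨ good S T ε1 ε2 a b2 := by
  have key : ∃ k : Fin 4, ∀ z : Fin n, okb k (decide (z ∈ S)) (decide (z ∈ T)) = true := by
    rcases hemp with h | h | h | h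
    · refine ⟨0, fun z => ?_⟩
      have hf : ¬(z ∈ S ∧ z ∈ T) := fun hz =>
        Finset.eq_empty_iff_forall_notMem.mp h z (Finset.mem_inter.mpr hz)
      simp only [okb]
      simp
      tauto
    · refine ⟨1, fun z => ?_⟩
      have hf : ¬(z ∈ S ∧ z ∉ T) := fun hz =>
        Finset.eq_empty_iff_forall_notMem.mp h z
          (Finset.mem_inter.mpr ⟨hz.1, Finset.mem_compl.mpr hz.2⟩)
      simp only [okb]
      simp
      tauto
    · refine ⟨2, fun z => ?_⟩
      have hf : ¬(z ∉ S ∧ z ∈ T) := fun hz =>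
        Finset.eq_empty_iff_forall_notMem.mp h z
          (Finset.mem_inter.mpr ⟨Finset.mem_compl.mpr hz.1, hz.2⟩)
      simp only [okb]
      simp
      tauto
    · refine ⟨3, fun z => ?_⟩
      have hf : ¬(z ∉ S ∧ z ∉ T) := fun hz =>
        Finset.eq_empty_iff_forall_notMem.mp h z
          (Finset.mem_inter.mpr ⟨Finset.mem_compl.mpr hz.1, Finset.mem_compl.mpr hz.2⟩)
      simp only [okb]
      simp
      tauto
  obtain ⟨k, hok⟩ := key
  have hmain := bool_logic k ε1 ε2 _ _ _ _ _ _ _ _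
    (hok i) (hok a) (hok b1) (hok b2)
    ((good_iff_goodb i a).mp h1) ((good_iff_goodb b1 b2).mp h2)
  rw [Bool.or_eq_true] at hmain
  rcases hmain with h' | h'
  · exact Or.inl ((good_iff_goodb a b1).mpr h')
  · exact Or.inr ((good_iff_goodb a b2).mpr h')

lemma good_symm {a b : Fin n} (h : good S T ε1 ε2 a b) : good S T ε1 ε2 b a := by
  unfold good at h ⊢
  cases ε1 <;> cases ε2 <;>
    simp only [if_true, if_false, Bool.false_eq_true] at h ⊢ <;> tauto

lemma exchange (hemp : S ∩ T = ∅ ∨ S ∩ Tᶜ = ∅ ∨ Sᶜ ∩ T = ∅ ∨ Sᶜ ∩ Tᶜ = ∅)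
    (B1 : Finset (Fin n)) (hB1 : B1 ∈ bases n S T ε1 ε2)
    (B2 : Finset (Fin n)) (hB2 : B2 ∈ bases n S T ε1 ε2)
    (i : Fin n) (hi : i ∈ B1 \ B2) :
    ∃ j ∈ B2 \ B1, insert j (B1.erase i) ∈ bases n S T ε1 ε2 := by
  obtain ⟨hiB1, hiB2⟩ := Finset.mem_sdiff.mp hi
  -- get the other element of B1
  obtain ⟨u, v, huv, hB1eq⟩ := Finset.card_eq_two.mp hB1.1
  have hia : ∃ a : Fin n, a ≠ i ∧ B1 = {i, a} := by
    rcases Finset.mem_insert.mp (hB1eq ▸ hiB1) with rfl | hv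
    · exact ⟨v, fun h => huv h.symm, by rw [hB1eq]⟩
    · rw [Finset.mem_singleton] at hv
      exact ⟨u, fun h => huv (by rw [h, hv]), by rw [hB1eq, hv, Finset.pair_comm]⟩
  obtain ⟨a, hai, hB1eq'⟩ := hia
  have herase : B1.erase i = {a} := by
    rw [hB1eq']
    rw [show ({i, a} : Finset (Fin n)) = insert i {a} from rfl]
    rw [Finset.erase_insert (by simp [Ne.symm hai])]
  by_cases haB2 : a ∈ B2
  · -- B2 = {a, c}; take j = c, the new set is B2 itself
    obtain ⟨u', v', huv', hB2eq⟩ := Finset.card_eq_two.mp hB2.1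
    have hc : ∃ c : Fin n, c ≠ a ∧ B2 = {a, c} := by
      rcases Finset.mem_insert.mp (hB2eq ▸ haB2) with rfl | hv'
      · exact ⟨v', fun h => huv' h.symm, by rw [hB2eq]⟩
      · rw [Finset.mem_singleton] at hv'
        exact ⟨u', fun h => huv' (by rw [h, hv']), by rw [hB2eq, hv', Finset.pair_comm]⟩
    obtain ⟨c, hca, hB2eq'⟩ := hc
    have hcB1 : c ∉ B1 := by
      rw [hB1eq']
      simp only [Finset.mem_insert, Finset.mem_singleton]
      rintro (rfl | rfl)
      · exact hiB2 (by rw [hB2eq']; simp)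
      · exact hca rfl
    refine ⟨c, Finset.mem_sdiff.mpr ⟨by rw [hB2eq']; simp, hcB1⟩, ?_⟩
    rw [herase]
    rw [show insert c ({a} : Finset (Fin n)) = {c, a} from rfl, Finset.pair_comm, ← hB2eq']
    exact hB2
  · -- B2 = {b1, b2} disjoint from {i, a}
    obtain ⟨b1, b2, hb12, hB2eq⟩ := Finset.card_eq_two.mp hB2.1
    have hb1B2 : b1 ∈ B2 := by rw [hB2eq]; simp
    have hb2B2 : b2 ∈ B2 := by rw [hB2eq]; simp
    have hb1a : b1 ≠ a := fun h => haB2 (h ▸ hb1B2)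
    have hb2a : b2 ≠ a := fun h => haB2 (h ▸ hb2B2)
    have hb1i : b1 ≠ i := fun h => hiB2 (h ▸ hb1B2)
    have hb2i : b2 ≠ i := fun h => hiB2 (h ▸ hb2B2)
    have hb1B1 : b1 ∉ B1 := by rw [hB1eq']; simp [hb1i, hb1a]
    have hb2B1 : b2 ∉ B1 := by rw [hB1eq']; simp [hb2i, hb2a]
    have hgood1 : good S T ε1 ε2 i a := by
      rw [← pair_mem_bases_iff (Ne.symm hai)]
      rw [← hB1eq']
      exact hB1
    have hgood2 : good S T ε1 ε2 b1 b2 := by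
      rw [← pair_mem_bases_iff hb12, ← hB2eq]
      exact hB2
    rcases exchange_logic hemp i a b1 b2 hgood1 hgood2 with hg | hg
    · refine ⟨b1, Finset.mem_sdiff.mpr ⟨hb1B2, hb1B1⟩, ?_⟩
      rw [herase, show insert b1 ({a} : Finset (Fin n)) = {b1, a} from rfl]
      exact (pair_mem_bases_iff (fun h => hb1a h)).mpr (good_symm hg)
    · refine ⟨b2, Finset.mem_sdiff.mpr ⟨hb2B2, hb2B1⟩, ?_⟩
      rw [herase, show insert b2 ({a} : Finset (Fin n)) = {b2, a} from rfl]
      exact (pair_mem_bases_iff (fun h => hb2a h)).mpr (good_symm hg)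

end Stmt15Aux

theorem stmt15 (n : ℕ) (S T : Finset (Fin n))
    (hS1 : 2 ≤ S.card) (hS2 : S.card ≤ n - 2)
    (hT1 : 2 ≤ T.card) (hT2 : T.card ≤ n - 2)
    (hemp : S ∩ T = ∅ ∨ S ∩ Tᶜ = ∅ ∨ Sᶜ ∩ T = ∅ ∨ Sᶜ ∩ Tᶜ = ∅) :
    ∀ ε1 ε2 : Bool,
      let Δ : Set (Fin n → ℝ) := {x | (∀ m, 0 ≤ x m ∧ x m ≤ 1) ∧ ∑ m, x m = 2}
      let C : Set (Fin n → ℝ) := {x ∈ Δ |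
        (if ε1 then (1 : ℝ) ≤ ∑ t ∈ S, x t else ∑ t ∈ S, x t ≤ 1) ∧
        (if ε2 then (1 : ℝ) ≤ ∑ t ∈ T, x t else ∑ t ∈ T, x t ≤ 1)}
      let ℬ : Set (Finset (Fin n)) := {B | B.card = 2 ∧ ind n B ∈ C}
      -- the cell is the matroid polytope of its 0/1 vertices …
      (C = convexHull ℝ (ind n '' ℬ)) ∧
      -- … and those vertices satisfy the matroid basis exchange property
      (∀ B1 ∈ ℬ, ∀ B2 ∈ ℬ, ∀ i ∈ B1 \ B2, ∃ j ∈ B2 \ B1,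
        insert j (B1.erase i) ∈ ℬ) := by
  intro ε1 ε2
  exact ⟨Stmt15Aux.cell_eq_hull hemp,
    fun B1 hB1 B2 hB2 i hi => Stmt15Aux.exchange hemp B1 hB1 B2 hB2 i hi⟩
end

section
/- Under the projection π: R^8 → R^4, (x_1,...,x_8) ↦ (x_1+x_2, x_3+x_4, x_5+x_6, x_7+x_8), the hypersimplex Δ_{4,8} maps onto the second dilate of the octahedron {y ∈ [0,2]^4 : Σ y_i = 4}, and the four regions of Δ_{4,8} defined by the cyclic inequality systems {x_{12} ≥ 1, x_{1234} ≥ 2, x_{123456} ≥ 3} and its three cyclic block rotations map onto the four regions {y_1 ≥ 1, y_1+y_2 ≥ 2, y_1+y_2+y_3 ≥ 3} and its cyclic rotations. -/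
/-- The projection `(x_1,…,x_8) ↦ (x_1+x_2, x_3+x_4, x_5+x_6, x_7+x_8)`. -/
def proj : (Fin 8 → ℝ) → (Fin 4 → ℝ) :=
  fun x i => x ⟨2 * i.val, by have := i.isLt; omega⟩ +
    x ⟨2 * i.val + 1, by have := i.isLt; omega⟩

open Fin.NatCast

lemma proj_sum (x : Fin 8 → ℝ) : ∑ i, proj x i = ∑ m, x m := by
  have mk : ∀ (k : ℕ) (h : k < 8), (⟨k, h⟩ : Fin 8) = (k : Fin 8) := by
    intro k h; simp [Fin.ext_iff, Nat.mod_eq_of_lt h]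
  have v0 : ((0 : Fin 4) : ℕ) = 0 := rfl
  have v1 : ((1 : Fin 4) : ℕ) = 1 := rfl
  have v2 : ((2 : Fin 4) : ℕ) = 2 := rfl
  have v3 : ((3 : Fin 4) : ℕ) = 3 := rfl
  simp only [proj, Fin.sum_univ_eight, Fin.sum_univ_four, v0, v1, v2, v3, mk]
  norm_num
  ring

lemma proj_half (y : Fin 4 → ℝ) :
    proj (fun m => y ⟨m.val / 2, by omega⟩ / 2) = y := by
  funext i
  show y ⟨2 * i.val / 2, _⟩ / 2 + y ⟨(2 * i.val + 1) / 2, _⟩ / 2 = y i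
  have h1 : 2 * i.val / 2 = i.val := by omega
  have h2 : (2 * i.val + 1) / 2 = i.val := by omega
  simp only [h1, h2, Fin.eta]
  ring

lemma proj_surj (y : Fin 4 → ℝ) (hy : (∀ i, 0 ≤ y i ∧ y i ≤ 2) ∧ ∑ i, y i = 4) :
    ∃ x : Fin 8 → ℝ, ((∀ m, 0 ≤ x m ∧ x m ≤ 1) ∧ ∑ m, x m = 4) ∧ proj x = y := by
  refine ⟨fun m => y ⟨m.val / 2, by omega⟩ / 2, ⟨fun m => ?_, ?_⟩, proj_half y⟩
  · have := hy.1 ⟨m.val / 2, by omega⟩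
    constructor <;> linarith [this.1, this.2]
  · rw [← proj_sum, proj_half, hy.2]

theorem stmt19 :
    let Δ : Set (Fin 8 → ℝ) := {x | (∀ m, 0 ≤ x m ∧ x m ≤ 1) ∧ ∑ m, x m = 4}
    let Oct : Set (Fin 4 → ℝ) := {y | (∀ i, 0 ≤ y i ∧ y i ≤ 2) ∧ ∑ i, y i = 4}
    (proj '' Δ = Oct) ∧
    ∀ c : Fin 4,
      proj '' {x ∈ Δ | ∀ m : Fin 3,
          ((m : ℕ) + 1 : ℝ) ≤ ∑ t ∈ Finset.range ((m : ℕ) + 1), proj x (c + (t : Fin 4))}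
        = {y ∈ Oct | ∀ m : Fin 3,
          ((m : ℕ) + 1 : ℝ) ≤ ∑ t ∈ Finset.range ((m : ℕ) + 1), y (c + (t : Fin 4))} := by
  intro Δ Oct
  have hmem : ∀ x ∈ Δ, proj x ∈ Oct := by
    rintro x ⟨hx, hs⟩
    constructor
    · intro i
      have h1 := hx ⟨2 * i.val, by omega⟩
      have h2 := hx ⟨2 * i.val + 1, by omega⟩
      constructor <;> simp only [proj] <;> linarith [h1.1, h1.2, h2.1, h2.2]
    · rw [proj_sum]; exact hs
  constructor
  · ext y
    constructor
    · rintro ⟨x, hx, rfl⟩; exact hmem x hx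
    · intro hy
      obtain ⟨x, hx, hxy⟩ := proj_surj y hy
      exact ⟨x, hx, hxy⟩
  · intro c
    ext y
    constructor
    · rintro ⟨x, ⟨hx, hineq⟩, rfl⟩
      exact ⟨hmem x hx, hineq⟩
    · rintro ⟨hy, hineq⟩
      obtain ⟨x, hx, hxy⟩ := proj_surj y hy
      exact ⟨x, ⟨hx, by simpa [hxy] using hineq⟩, hxy⟩
end
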